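/- Every interpretation of regular expressions over Σ ∪ {⊤} into binary relations on a set X (with + as union, · as composition, * as reflexive-transitive closure, 0 as ∅, 1 as identity, ⊤ as X×X) satisfies: σ̂(e) = ⋃_{u ∈ ⟦e⟧} σ̂(u), where ⟦e⟧ is the language of words of e and σ̂(u) is the relational interpretation of the word u. -/

import Mathlib

open scoped Computability


/-- Relational composition of subsets of `X × X`. -/
def rcomp {X : Type*} (R S : Set (X × X)) : Set (X × X) :=
  {p | ∃ y : X, (p.1, y) ∈ R ∧ (y, p.2) ∈ S}

/-- The identity relation on `X`. -/
def ridRel {X : Type*} : Set (X × X) := {p | p.1 = p.2}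

/-- `n`-fold relational composition. -/
def rpow {X : Type*} (R : Set (X × X)) : ℕ → Set (X × X)
  | 0 => ridRel
  | n + 1 => rcomp R (rpow R n)

/-- Reflexive-transitive closure of a relation. -/
def rstar {X : Type*} (R : Set (X × X)) : Set (X × X) := ⋃ n : ℕ, rpow R n

/-- Relational interpretation of a word. -/
def relInterp {α X : Type*} (σ : α → Set (X × X)) : List α → Set (X × X)
  | [] => ridRel
  | a :: w => rcomp (σ a) (relInterp σ w)

/-- Relational interpretation of a regular expression: `+` as union, `·` as
composition, `*` as reflexive-transitive closure, `0` as `∅`, `1` as the identity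
relation, each letter via `σ` (so `⊤` as `X × X` when `σ ⊤ = X × X`). -/
def relEval {α X : Type*} (σ : α → Set (X × X)) : RegularExpression α → Set (X × X)
  | RegularExpression.zero => ∅
  | RegularExpression.epsilon => ridRel
  | RegularExpression.char a => σ a
  | RegularExpression.plus e f => relEval σ e ∪ relEval σ f
  | RegularExpression.comp e f => rcomp (relEval σ e) (relEval σ f)
  | RegularExpression.star e => rstar (relEval σ e)

lemma rcomp_rid {X : Type*} (R : Set (X × X)) : rcomp R ridRel = R := by
  ext ⟨a, b⟩
  constructor
  · rintro ⟨y, hy, hid⟩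
    cases hid
    exact hy
  · intro h
    exact ⟨b, h, rfl⟩

lemma rid_rcomp {X : Type*} (R : Set (X × X)) : rcomp ridRel R = R := by
  ext ⟨a, b⟩
  constructor
  · rintro ⟨y, hid, hy⟩
    cases hid
    exact hy
  · intro h
    exact ⟨a, rfl, h⟩

lemma rcomp_assoc {X : Type*} (R S T : Set (X × X)) :
    rcomp (rcomp R S) T = rcomp R (rcomp S T) := by
  ext ⟨a, b⟩
  constructor
  · rintro ⟨y, ⟨z, hz, hzy⟩, hy⟩
    exact ⟨z, hz, y, hzy, hy⟩
  · rintro ⟨y, hy, z, hz, hzb⟩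
    exact ⟨z, ⟨y, hy, hz⟩, hzb⟩

lemma relInterp_append {α X : Type*} (σ : α → Set (X × X)) (u v : List α) :
    relInterp σ (u ++ v) = rcomp (relInterp σ u) (relInterp σ v) := by
  induction u with
  | nil => simp [relInterp, rid_rcomp]
  | cons a u ih => simp [relInterp, ih, rcomp_assoc]

lemma rcomp_iUnion {α X : Type*} (L M : Language α) (I J : List α → Set (X × X)) :
    rcomp (⋃ u ∈ L, I u) (⋃ v ∈ M, J v) =
      ⋃ u ∈ L, ⋃ v ∈ M, rcomp (I u) (J v) := by
  ext ⟨a, b⟩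
  simp only [rcomp, Set.mem_setOf_eq, Set.mem_iUnion]
  tauto

lemma rstar_iUnion {α X : Type*} (L : Language α) (I : α → Set (X × X)) :
    rstar (⋃ u ∈ L, relInterp I u) = ⋃ u ∈ L∗, relInterp I u := by
  ext ⟨a, b⟩
  simp only [rstar, Set.mem_iUnion]
  constructor
  · rintro ⟨n, hn⟩
    induction n generalizing a with
    | zero =>
      exact ⟨[], Language.nil_mem_kstar L, hn⟩
    | succ n ih =>
      obtain ⟨y, hy1, hy2⟩ := hn
      simp only [Set.mem_iUnion] at hy1
      obtain ⟨u, hu, h1⟩ := hy1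
      obtain ⟨v, hv, h2⟩ := ih y hy2
      rw [Language.mem_kstar] at hv
      obtain ⟨ws, rfl, hws⟩ := hv
      refine ⟨(u :: ws).flatten, Language.join_mem_kstar ?_, ?_⟩
      · intro w hw
        rcases List.mem_cons.mp hw with rfl | hw
        · exact hu
        · exact hws w hw
      · rw [List.flatten_cons, relInterp_append]
        exact ⟨y, h1, h2⟩
  · rintro ⟨u, hu, h⟩
    rw [Language.mem_kstar] at hu
    obtain ⟨ws, rfl, hws⟩ := hu
    induction ws generalizing a with
    | nil => exact ⟨0, h⟩
    | cons w ws ih =>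
      rw [List.flatten_cons, relInterp_append] at h
      obtain ⟨y, h1, h2⟩ := h
      obtain ⟨n, hn⟩ := ih y (fun y hy => hws y (List.mem_cons_of_mem _ hy)) h2
      refine ⟨n + 1, y, ?_, hn⟩
      simp only [Set.mem_iUnion]
      exact ⟨w, hws w List.mem_cons_self, h1⟩

/-- The relational interpretation of a regular expression is the union of the
relational interpretations of the words in its language. -/
theorem relEval_eq_iUnion {α X : Type*} (top : α) (σ : α → Set (X × X))
    (hσ : σ top = Set.univ) (e : RegularExpression α) :
    relEval σ e = ⋃ u ∈ e.matches', relInterp σ u := by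
  induction e with
  | zero =>
    simp [relEval, RegularExpression.matches'_zero]
  | epsilon =>
    simp only [relEval, RegularExpression.matches'_epsilon]
    ext p
    simp only [Set.mem_iUnion, Language.mem_one]
    constructor
    · intro h; exact ⟨[], rfl, h⟩
    · rintro ⟨u, rfl, h⟩; exact h
  | char a =>
    simp only [relEval, RegularExpression.matches'_char]
    ext p
    simp only [Set.mem_iUnion, Set.mem_singleton_iff]
    constructor
    · intro h
      exact ⟨[a], rfl, by simpa [relInterp, rcomp_rid] using h⟩
    · rintro ⟨u, rfl, h⟩
      simpa [relInterp, rcomp_rid] using h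
  | plus e f ihe ihf =>
    simp only [relEval, ihe, ihf, RegularExpression.matches'_add]
    ext p
    simp only [Set.mem_union, Set.mem_iUnion, Language.mem_add]
    constructor
    · rintro (⟨u, hu, h⟩ | ⟨u, hu, h⟩)
      · exact ⟨u, Or.inl hu, h⟩
      · exact ⟨u, Or.inr hu, h⟩
    · rintro ⟨u, hu | hu, h⟩
      · exact Or.inl ⟨u, hu, h⟩
      · exact Or.inr ⟨u, hu, h⟩
  | comp e f ihe ihf =>
    simp only [relEval, ihe, ihf, RegularExpression.matches'_mul,
      rcomp_iUnion]
    ext p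
    simp only [Set.mem_iUnion, Language.mem_mul]
    constructor
    · rintro ⟨u, hu, v, hv, h⟩
      exact ⟨u ++ v, ⟨u, hu, v, hv, rfl⟩, by rwa [relInterp_append]⟩
    · rintro ⟨w, ⟨u, hu, v, hv, rfl⟩, h⟩
      rw [relInterp_append] at h
      exact ⟨u, hu, v, hv, h⟩
  | star e ih =>
    rw [relEval, ih, rstar_iUnion, RegularExpression.matches'_star]
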